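/- Let n ≥ 1 and let Ω ⊆ EuclideanSpace ℝ (Fin n) be an open set such that Metric.ball 0 r ⊆ Ω ⊆ Metric.ball 0 R for some 0 < r ≤ R, and such that Ω is star-shaped with respect to every point of Metric.ball 0 ρ for some ρ > 0. Then for all x, y in the frontier of Ω, writing α := Real.arccos (⟪x, y⟫ / (‖x‖ * ‖y‖)) ∈ [0, π] for the angle between x and y, one has r * (2/π) * α ≤ ‖x - y‖ and ‖x - y‖ ≤ (R^2 / ρ) * α. -/

import Mathlib

open scoped RealInnerProductSpace
open Real Metric

section AuxReal

private lemma sd_aux0 (a b d p r : ℝ) (hr : 0 < r) (har : r ≤ a) (hbr : r ≤ b)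
    (hd0 : 0 ≤ d) (hd2 : d^2 = a^2 - 2*p + b^2)
    (hcge : -1 ≤ p/(a*b)) (hcle : p/(a*b) ≤ 1) :
    r * (2/π) * Real.arccos (p/(a*b)) ≤ d := by
  have ha0 : 0 < a := lt_of_lt_of_le hr har
  have hb0 : 0 < b := lt_of_lt_of_le hr hbr
  set α := Real.arccos (p/(a*b)) with hαdef
  have hα0 : 0 ≤ α := Real.arccos_nonneg _
  have hαπ : α ≤ π := Real.arccos_le_pi _
  have jordan : Real.cos α ≤ 1 - 2/π^2 * α^2 :=
    Real.cos_le_one_sub_mul_cos_sq (abs_le.2 ⟨by linarith [Real.pi_pos], hαπ⟩)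
  rw [hαdef, Real.cos_arccos hcge hcle] at jordan
  have hpab : p = (p/(a*b)) * (a*b) := by field_simp
  have h1 : 2*r^2*(1 - p/(a*b)) ≤ d^2 := by
    nlinarith [sq_nonneg (a-b), mul_nonneg (by linarith : (0:ℝ) ≤ 1 - p/(a*b))
      (by nlinarith : (0:ℝ) ≤ a*b - r^2), hd2]
  have h3 : (r * (2/π) * α)^2 ≤ d^2 := by
    have heq : (r * (2/π) * α)^2 = 2*r^2*(2/π^2 * α^2) := by ring
    rw [heq]
    have h2 : 2/π^2 * α^2 ≤ 1 - p/(a*b) := by linarith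
    nlinarith [h2, sq_nonneg r, hr]
  have hlhs0 : 0 ≤ r * (2/π) * α := by positivity
  have := Real.sqrt_le_sqrt h3
  rwa [Real.sqrt_sq hlhs0, Real.sqrt_sq hd0] at this

private lemma sd_aux1 (a b d p ρ : ℝ) (hd : 0 < d) (hq : d^2 ≤ a^2 - p)
    (hd2 : d^2 = a^2 - 2*p + b^2)
    (hsq : (d^2/(a^2-p)*ρ)^2 ≤ b^2 - 2*(1-d^2/(a^2-p))*p + (1-d^2/(a^2-p))^2*a^2) :
    ρ^2*d^2 ≤ a^2*b^2 - p^2 := by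
  have hq0 : 0 < a^2 - p := lt_of_lt_of_le (by positivity) hq
  set q := a^2 - p with hqdef
  have key : (d^2)^2*ρ^2 ≤ (d^2)^2*a^2 - d^2*q^2 := by
    have h := mul_le_mul_of_nonneg_left hsq (le_of_lt (by positivity : (0:ℝ) < q^2))
    have e1 : q^2 * ((d^2/q*ρ)^2) = (d^2)^2*ρ^2 := by field_simp
    have e2 : q^2 * (b^2 - 2*(1-d^2/q)*p + (1-d^2/q)^2*a^2)
        = b^2*q^2 - 2*(q-d^2)*q*p + (q-d^2)^2*a^2 := by field_simp
    rw [e1, e2] at h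
    nlinarith [h]
  have e3 : (d^2)^2*a^2 - d^2*q^2 = d^2*(a^2*b^2-p^2) := by rw [hqdef, hd2]; ring
  have key2 : d^2*(ρ^2*d^2) ≤ d^2*(a^2*b^2-p^2) := by rw [← e3]; nlinarith [key]
  exact (mul_le_mul_iff_right₀ (by positivity : (0:ℝ) < d^2)).mp key2

private lemma sd_aux2 (a b d p ρ R : ℝ) (ha : 0 < a) (hb : 0 < b) (hρ : 0 < ρ)
    (haR : a ≤ R) (hbR : b ≤ R) (hR0 : 0 < R) (hd0 : 0 ≤ d)
    (hcge : -1 ≤ p/(a*b)) (hcle : p/(a*b) ≤ 1)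
    (hkey : ρ^2 * d^2 ≤ a^2*b^2 - p^2) :
    d ≤ (R^2/ρ) * Real.arccos (p/(a*b)) := by
  set α := Real.arccos (p/(a*b)) with hαdef
  have hα0 : 0 ≤ α := Real.arccos_nonneg _
  have hsinα : Real.sin α = Real.sqrt (1 - (p/(a*b))^2) := Real.sin_arccos _
  have hsin0 : 0 ≤ Real.sin α := by rw [hsinα]; positivity
  have hcs : p^2 ≤ a^2*b^2 := by nlinarith [sq_nonneg (ρ*d)]
  have hssq : (a*b*Real.sin α)^2 = a^2*b^2 - p^2 := by
    rw [hsinα, mul_pow, Real.sq_sqrt (by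
      rw [div_pow, sub_nonneg, div_le_one (by positivity : (0:ℝ) < (a*b)^2)]
      nlinarith [hcs])]
    field_simp
  have h5 : (ρ*d)^2 ≤ (a*b*Real.sin α)^2 := by rw [hssq]; nlinarith [hkey]
  have h6 : ρ*d ≤ a*b*Real.sin α := by
    have := Real.sqrt_le_sqrt h5
    rwa [Real.sqrt_sq (by positivity), Real.sqrt_sq (by positivity)] at this
  have hsinle : Real.sin α ≤ α := Real.sin_le hα0
  have h8 : a*b*Real.sin α ≤ a*b*α :=
    mul_le_mul_of_nonneg_left hsinle (by positivity)
  have h9 : a*b*α ≤ R^2*α :=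
    mul_le_mul_of_nonneg_right (by nlinarith : a*b ≤ R^2) hα0
  have h7 : ρ*d ≤ R^2*α := by linarith
  rw [div_mul_eq_mul_div, le_div_iff₀ hρ]
  linarith

private lemma sd_aux3 (a b d p R : ℝ) (ha : 0 < a) (hb : 0 < b) (hd : 0 < d)
    (haR : a ≤ R) (hbR : b ≤ R)
    (hd2 : d^2 = a^2 - 2*p + b^2) (hpa : p < a^2) (hpb : p < b^2)
    (hcs : p^2 ≤ a^2*b^2)
    (hua : a^2 - p ≤ a*d) (hvb : b^2 - p ≤ b*d) :
    d ≤ R * Real.arccos (p/(a*b)) := by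
  set u := (a^2-p)/(a*d) with hudef
  set v := (b^2-p)/(b*d) with hvdef
  have hu0 : 0 < u := by apply div_pos (by linarith) (by positivity)
  have hv0 : 0 < v := by apply div_pos (by linarith) (by positivity)
  have hu1 : u ≤ 1 := (div_le_one (by positivity)).2 hua
  have hv1 : v ≤ 1 := (div_le_one (by positivity)).2 hvb
  set θx := Real.arccos u with hθx
  set θy := Real.arccos v with hθy
  have hθx2 : θx ≤ π/2 := Real.arccos_le_pi_div_two.2 hu0.le
  have hθy2 : θy ≤ π/2 := Real.arccos_le_pi_div_two.2 hv0.le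
  have hθx0 : 0 ≤ θx := Real.arccos_nonneg _
  have hθy0 : 0 ≤ θy := Real.arccos_nonneg _
  have hcosx : Real.cos θx = u := Real.cos_arccos (by linarith) hu1
  have hcosy : Real.cos θy = v := Real.cos_arccos (by linarith) hv1
  have e1 : 1 - u^2 = (a^2*b^2-p^2)/(a^2*d^2) := by
    rw [hudef]; field_simp; linear_combination (a^2)*hd2
  have e2 : 1 - v^2 = (a^2*b^2-p^2)/(b^2*d^2) := by
    rw [hvdef]; field_simp; linear_combination (b^2)*hd2
  have hsinprod : Real.sin θx * Real.sin θy = (a^2*b^2-p^2)/(a*b*d^2) := by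
    rw [hθx, hθy, Real.sin_arccos, Real.sin_arccos,
      ← Real.sqrt_mul (by nlinarith [sq_nonneg u] : (0:ℝ) ≤ 1 - u^2)]
    have e : (1-u^2)*(1-v^2) = ((a^2*b^2-p^2)/(a*b*d^2))^2 := by
      rw [e1, e2, div_mul_div_comm, div_pow]
      congr 1 <;> ring
    rw [e, Real.sqrt_sq (div_nonneg (by nlinarith) (by positivity))]
  have hcosprod : Real.cos θx * Real.cos θy = (a^2-p)*(b^2-p)/(a*b*d^2) := by
    rw [hcosx, hcosy, hudef, hvdef, div_mul_div_comm]
    congr 1; ring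
  have hsum : Real.cos (π - (θx+θy)) = p/(a*b) := by
    rw [Real.cos_pi_sub, Real.cos_add, hsinprod, hcosprod]
    field_simp; linear_combination (-p)*hd2
  have hαeq : Real.arccos (p/(a*b)) = π - (θx+θy) := by
    rw [← hsum, Real.arccos_cos (by linarith) (by linarith)]
  have hdeq : d = a*u + b*v := by
    rw [hudef, hvdef]; field_simp; linear_combination hd2
  have hcu : u ≤ π/2 - θx := by
    have h := Real.sin_le (by linarith : (0:ℝ) ≤ π/2 - θx)
    rwa [Real.sin_pi_div_two_sub, hcosx] at h
  have hcv : v ≤ π/2 - θy := by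
    have h := Real.sin_le (by linarith : (0:ℝ) ≤ π/2 - θy)
    rwa [Real.sin_pi_div_two_sub, hcosy] at h
  rw [hαeq]
  have h1 : a*u ≤ R*(π/2-θx) := mul_le_mul haR hcu hu0.le (by linarith)
  have h2 : b*v ≤ R*(π/2-θy) := mul_le_mul hbR hcv hv0.le (by linarith)
  calc d = a*u + b*v := hdeq
    _ ≤ R*(π/2-θx) + R*(π/2-θy) := by linarith
    _ = R*(π - (θx+θy)) := by ring

end AuxReal

set_option maxHeartbeats 1000000 in
theorem stardomains_boundary_angle_estimate
    (n : ℕ) (hn : 1 ≤ n) (Ω : Set (EuclideanSpace ℝ (Fin n))) (hΩ : IsOpen Ω)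
    (r R ρ : ℝ) (hr : 0 < r) (hrR : r ≤ R) (hρ : 0 < ρ)
    (hball : Metric.ball (0 : EuclideanSpace ℝ (Fin n)) r ⊆ Ω)
    (hΩR : Ω ⊆ Metric.ball (0 : EuclideanSpace ℝ (Fin n)) R)
    (hstar : ∀ z ∈ Metric.ball (0 : EuclideanSpace ℝ (Fin n)) ρ, StarConvex ℝ z Ω)
    (x y : EuclideanSpace ℝ (Fin n)) (hx : x ∈ frontier Ω) (hy : y ∈ frontier Ω) :
    r * (2 / Real.pi) * Real.arccos (⟪x, y⟫ / (‖x‖ * ‖y‖)) ≤ ‖x - y‖ ∧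
      ‖x - y‖ ≤ (R ^ 2 / ρ) * Real.arccos (⟪x, y⟫ / (‖x‖ * ‖y‖)) := by
  rw [hΩ.frontier_eq] at hx hy
  obtain ⟨hxc, hxn⟩ := hx
  obtain ⟨hyc, hyn⟩ := hy
  have hR0 : 0 < R := lt_of_lt_of_le hr hrR
  have haR : ‖x‖ ≤ R := by
    have h := closure_mono hΩR hxc
    rw [closure_ball (0 : EuclideanSpace ℝ (Fin n)) hR0.ne'] at h
    simpa using mem_closedBall_zero_iff.1 h
  have hbR : ‖y‖ ≤ R := by
    have h := closure_mono hΩR hyc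
    rw [closure_ball (0 : EuclideanSpace ℝ (Fin n)) hR0.ne'] at h
    simpa using mem_closedBall_zero_iff.1 h
  have har : r ≤ ‖x‖ := by
    by_contra h; push_neg at h
    exact hxn (hball (mem_ball_zero_iff.2 h))
  have hbr : r ≤ ‖y‖ := by
    by_contra h; push_neg at h
    exact hyn (hball (mem_ball_zero_iff.2 h))
  have ha0 : 0 < ‖x‖ := lt_of_lt_of_le hr har
  have hb0 : 0 < ‖y‖ := lt_of_lt_of_le hr hbr
  have h0Ω : (0 : EuclideanSpace ℝ (Fin n)) ∈ Ω := hball (by simpa using hr)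
  have hρR : ρ ≤ R := by
    by_contra h; push_neg at h
    set z : EuclideanSpace ℝ (Fin n) := ((R + ρ)/2) • EuclideanSpace.single ⟨0, hn⟩ (1:ℝ)
      with hzdef
    have hz : ‖z‖ = (R + ρ)/2 := by
      rw [hzdef, norm_smul, EuclideanSpace.norm_single]
      simp only [norm_one, mul_one, Real.norm_eq_abs]
      rw [abs_of_nonneg (by linarith : (0:ℝ) ≤ (R + ρ)/2)]
    have hzρ : z ∈ Metric.ball (0 : EuclideanSpace ℝ (Fin n)) ρ :=
      mem_ball_zero_iff.2 (by rw [hz]; linarith)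
    have hzΩ : z ∈ Ω := by
      have := hstar z hzρ h0Ω (a := 1) (b := 0) (by norm_num) le_rfl (by norm_num)
      simpa using this
    have := mem_ball_zero_iff.1 (hΩR hzΩ)
    rw [hz] at this; linarith
  have hS : ∀ u ∈ closure Ω, ∀ z : EuclideanSpace ℝ (Fin n), ‖z‖ < ρ →
      ∀ l : ℝ, 0 < l → l ≤ 1 → l • z + (1-l) • u ∈ Ω := by
    intro u hu z hz l hl0 hl1
    have hε : 0 < l * (ρ - ‖z‖) / 2 := by
      have : 0 < ρ - ‖z‖ := by linarith
      positivity
    obtain ⟨u', hu', hdu⟩ := Metric.mem_closure_iff.1 hu _ hε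
    have hc : 0 ≤ l⁻¹ * (1-l) := mul_nonneg (inv_nonneg.2 hl0.le) (by linarith)
    set z' := z + (l⁻¹ * (1 - l)) • (u - u') with hz'def
    have hz'n : ‖z'‖ < ρ := by
      have h1 : ‖(l⁻¹ * (1 - l)) • (u - u')‖ = l⁻¹ * (1-l) * ‖u - u'‖ := by
        rw [norm_smul, Real.norm_of_nonneg hc]
      have hduu : ‖u - u'‖ ≤ l * (ρ - ‖z‖) / 2 := by
        rw [← dist_eq_norm]; exact hdu.le
      have h2 : l⁻¹ * (1-l) * ‖u - u'‖ ≤ (ρ - ‖z‖)/2 := by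
        calc l⁻¹ * (1-l) * ‖u - u'‖ ≤ l⁻¹ * (1-l) * (l * (ρ - ‖z‖) / 2) :=
              mul_le_mul_of_nonneg_left hduu hc
          _ = (1-l) * ((ρ - ‖z‖)/2) := by field_simp [hl0.ne']
          _ ≤ 1 * ((ρ - ‖z‖)/2) := by
              apply mul_le_mul_of_nonneg_right (by linarith)
              linarith
          _ = (ρ - ‖z‖)/2 := one_mul _
      calc ‖z'‖ ≤ ‖z‖ + ‖(l⁻¹ * (1 - l)) • (u - u')‖ := norm_add_le _ _
        _ ≤ ‖z‖ + (ρ - ‖z‖)/2 := by rw [h1]; linarith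
        _ < ρ := by linarith
    have key : l • z' + (1-l) • u' = l • z + (1-l) • u := by
      have hll : l * (l⁻¹ * (1-l)) = 1 - l := by field_simp
      rw [hz'def, smul_add, smul_smul, hll, smul_sub]
      abel
    have := hstar z' (mem_ball_zero_iff.2 hz'n) hu' (a := l) (b := 1-l)
      hl0.le (by linarith) (by ring)
    rwa [key] at this
  have hcone : ∀ u v : EuclideanSpace ℝ (Fin n), u ∈ closure Ω → v ∉ Ω →
      ∀ l : ℝ, 0 < l → l ≤ 1 → l * ρ ≤ ‖v - (1-l) • u‖ := by
    intro u v hu hv l hl0 hl1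
    by_contra h; push_neg at h
    set z := l⁻¹ • (v - (1-l) • u) with hzdef
    have hzn : ‖z‖ < ρ := by
      rw [hzdef, norm_smul, Real.norm_of_nonneg (inv_nonneg.2 hl0.le)]
      rw [inv_mul_lt_iff₀ hl0]
      linarith [h]
    have hvz : l • z + (1-l) • u = v := by
      rw [hzdef, smul_inv_smul₀ hl0.ne']
      abel
    exact hv (hvz ▸ hS u hu z hzn l hl0 hl1)
  by_cases hxy : x = y
  · subst hxy
    rw [sub_self, norm_zero, real_inner_self_eq_norm_sq]
    rw [show ‖x‖^2 / (‖x‖ * ‖x‖) = 1 by rw [sq]; field_simp]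
    rw [Real.arccos_one]
    constructor <;> simp
  have hd0 : 0 < ‖x - y‖ := norm_sub_pos_iff.2 hxy
  have hd2 : ‖x - y‖^2 = ‖x‖^2 - 2*⟪x, y⟫ + ‖y‖^2 := norm_sub_sq_real x y
  have hcs : ⟪x, y⟫^2 ≤ ‖x‖^2*‖y‖^2 := by
    have h := abs_real_inner_le_norm x y
    nlinarith [h, abs_nonneg ⟪x, y⟫, sq_abs ⟪x, y⟫]
  have habpos : 0 < ‖x‖ * ‖y‖ := mul_pos ha0 hb0
  have hcle : ⟪x, y⟫ / (‖x‖ * ‖y‖) ≤ 1 := by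
    rw [div_le_one habpos]
    nlinarith [hcs]
  have hcge : -1 ≤ ⟪x, y⟫ / (‖x‖ * ‖y‖) := by
    rw [le_div_iff₀ habpos]
    nlinarith [hcs]
  -- norm expansions for the cone inequality
  have hexp : ∀ l : ℝ, ‖y - (1-l) • x‖^2 = ‖y‖^2 - 2*(1-l)*⟪x, y⟫ + (1-l)^2*‖x‖^2 := by
    intro l
    rw [norm_sub_sq_real, real_inner_smul_right, real_inner_comm, norm_smul, mul_pow,
      Real.norm_eq_abs, sq_abs]
    ring
  have hexp' : ∀ l : ℝ, ‖x - (1-l) • y‖^2 = ‖x‖^2 - 2*(1-l)*⟪x, y⟫ + (1-l)^2*‖y‖^2 := by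
    intro l
    rw [norm_sub_sq_real, real_inner_smul_right, norm_smul, mul_pow,
      Real.norm_eq_abs, sq_abs]
    ring
  refine ⟨sd_aux0 ‖x‖ ‖y‖ ‖x - y‖ ⟪x, y⟫ r hr har hbr hd0.le hd2 hcge hcle, ?_⟩
  -- upper bound: three cases
  rcases le_or_gt (‖y‖^2) ⟪x, y⟫ with hp1 | hp1
  · -- case 1: use the cone from x
    have hq : ‖x - y‖^2 ≤ ‖x‖^2 - ⟪x, y⟫ := by nlinarith [hd2]
    have hq0 : 0 < ‖x‖^2 - ⟪x, y⟫ := lt_of_lt_of_le (by positivity) hq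
    set l := ‖x - y‖^2 / (‖x‖^2 - ⟪x, y⟫) with hldef
    have hl0 : 0 < l := div_pos (by positivity) hq0
    have hl1 : l ≤ 1 := (div_le_one hq0).2 hq
    have hc1 := hcone x y hxc hyn l hl0 hl1
    have hsq : (l*ρ)^2 ≤ ‖y - (1-l) • x‖^2 :=
      pow_le_pow_left₀ (by positivity) hc1 2
    rw [hexp l] at hsq
    have hkey : ρ^2 * ‖x - y‖^2 ≤ ‖x‖^2*‖y‖^2 - ⟪x, y⟫^2 :=
      sd_aux1 ‖x‖ ‖y‖ ‖x - y‖ ⟪x, y⟫ ρ hd0 hq hd2 (by rw [← hldef]; exact hsq)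
    exact sd_aux2 ‖x‖ ‖y‖ ‖x - y‖ ⟪x, y⟫ ρ R ha0 hb0 hρ haR hbR hR0 hd0.le hcge hcle hkey
  rcases le_or_gt (‖x‖^2) ⟪x, y⟫ with hp2 | hp2
  · -- case 2: use the cone from y
    have hd2' : ‖x - y‖^2 = ‖y‖^2 - 2*⟪x, y⟫ + ‖x‖^2 := by rw [hd2]; ring
    have hq : ‖x - y‖^2 ≤ ‖y‖^2 - ⟪x, y⟫ := by nlinarith [hd2]
    have hq0 : 0 < ‖y‖^2 - ⟪x, y⟫ := lt_of_lt_of_le (by positivity) hq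
    set l := ‖x - y‖^2 / (‖y‖^2 - ⟪x, y⟫) with hldef
    have hl0 : 0 < l := div_pos (by positivity) hq0
    have hl1 : l ≤ 1 := (div_le_one hq0).2 hq
    have hc1 := hcone y x hyc hxn l hl0 hl1
    have hsq : (l*ρ)^2 ≤ ‖x - (1-l) • y‖^2 :=
      pow_le_pow_left₀ (by positivity) hc1 2
    rw [hexp' l] at hsq
    have hkey : ρ^2 * ‖x - y‖^2 ≤ ‖y‖^2*‖x‖^2 - ⟪x, y⟫^2 :=
      sd_aux1 ‖y‖ ‖x‖ ‖x - y‖ ⟪x, y⟫ ρ hd0 hq hd2' (by rw [← hldef]; exact hsq)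
    exact sd_aux2 ‖x‖ ‖y‖ ‖x - y‖ ⟪x, y⟫ ρ R ha0 hb0 hρ haR hbR hR0 hd0.le hcge hcle
      (by nlinarith [hkey])
  · -- case 3: both inner products positive, planar angle argument
    have hxxy : ⟪x, x - y⟫ = ‖x‖^2 - ⟪x, y⟫ := by
      rw [inner_sub_right, real_inner_self_eq_norm_sq]
    have hyyx : ⟪y, y - x⟫ = ‖y‖^2 - ⟪x, y⟫ := by
      rw [inner_sub_right, real_inner_self_eq_norm_sq, real_inner_comm]
    have hua : ‖x‖^2 - ⟪x, y⟫ ≤ ‖x‖ * ‖x - y‖ := by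
      rw [← hxxy]; exact real_inner_le_norm x (x - y)
    have hvb : ‖y‖^2 - ⟪x, y⟫ ≤ ‖y‖ * ‖x - y‖ := by
      rw [← hyyx, show ‖x - y‖ = ‖y - x‖ from (norm_sub_rev x y)]
      exact real_inner_le_norm y (y - x)
    have h3 := sd_aux3 ‖x‖ ‖y‖ ‖x - y‖ ⟪x, y⟫ R ha0 hb0 hd0 haR hbR hd2 hp2 hp1 hcs hua hvb
    have hRR : R ≤ R^2/ρ := by
      rw [le_div_iff₀ hρ]; nlinarith [hρR, hR0]
    calc ‖x - y‖ ≤ R * Real.arccos (⟪x, y⟫/(‖x‖*‖y‖)) := h3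
      _ ≤ (R^2/ρ) * Real.arccos (⟪x, y⟫/(‖x‖*‖y‖)) :=
          mul_le_mul_of_nonneg_right hRR (Real.arccos_nonneg _)
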